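/- Let V : [0,∞) → [0,∞) be a differentiable function with V(t) ≥ 0 for all t, and suppose there exist constants k, p, q > 0 and α, β > 0 with 0 < αk < 1 and βk > 1 such that V'(t) ≤ -(p·V(t)^α + q·V(t)^β)^k for all t ≥ 0. Then V reaches zero in a fixed time independent of V(0): there exists T ≤ T_max := 1/(p^k(1-αk)) + 1/(q^k(βk-1)) such that V(t) = 0 for all t ≥ T. -/

import Mathlib

lemma deriv_lower_bound_aux {f : ℝ → ℝ} {a b c : ℝ} (hab : a ≤ b)
    (hcont : ContinuousOn f (Set.Icc a b))
    (hdiff : ∀ x ∈ Set.Ioo a b, DifferentiableAt ℝ f x)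
    (hderiv : ∀ x ∈ Set.Ioo a b, c ≤ deriv f x) :
    f a + c * (b - a) ≤ f b := by
  have hF : MonotoneOn (fun t => f t - c * t) (Set.Icc a b) := by
    apply monotoneOn_of_deriv_nonneg (convex_Icc a b)
    · exact hcont.sub (continuousOn_const.mul continuousOn_id)
    · rw [interior_Icc]
      intro x hx
      exact ((hdiff x hx).sub ((differentiableAt_id.const_mul c))).differentiableWithinAt
    · rw [interior_Icc]
      intro x hx
      have h1 : DifferentiableAt ℝ (fun t : ℝ => c * t) x := differentiableAt_id.const_mul c
      rw [deriv_fun_sub (hdiff x hx) h1]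
      have h2 : deriv (fun t : ℝ => c * t) x = c := by
        have := ((hasDerivAt_id x).const_mul c).deriv
        simpa using this
      rw [h2]
      linarith [hderiv x hx]
  have := hF (Set.left_mem_Icc.2 hab) (Set.right_mem_Icc.2 hab) hab
  simp only at this
  linarith



/-- **Fixed-time stability Lyapunov lemma.**
If `V : [0,∞) → [0,∞)` is differentiable, nonnegative, and satisfies
`V'(t) ≤ -(p·V(t)^α + q·V(t)^β)^k` for all `t ≥ 0` with `k, p, q > 0`,
`0 < αk < 1` and `βk > 1`, then `V` reaches zero within the fixed time
`T_max = 1/(p^k(1-αk)) + 1/(q^k(βk-1))`, independent of `V(0)`. -/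
theorem fixed_time_stability
    (V : ℝ → ℝ) (k p q α β : ℝ)
    (hk : 0 < k) (hp : 0 < p) (hq : 0 < q) (hα : 0 < α) (hβ : 0 < β)
    (hαk0 : 0 < α * k) (hαk1 : α * k < 1) (hβk : 1 < β * k)
    (hVnonneg : ∀ t, 0 ≤ t → 0 ≤ V t)
    (hVdiff : ∀ t, 0 ≤ t → DifferentiableAt ℝ V t)
    (hVineq : ∀ t, 0 ≤ t → deriv V t ≤ -((p * V t ^ α + q * V t ^ β) ^ k)) :
    ∃ T : ℝ, T ≤ 1 / (p ^ k * (1 - α * k)) + 1 / (q ^ k * (β * k - 1)) ∧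
      ∀ t, T ≤ t → V t = 0 := by
  set T2 : ℝ := 1 / (p ^ k * (1 - α * k)) with hT2def
  set T1 : ℝ := 1 / (q ^ k * (β * k - 1)) with hT1def
  have hpk : (0:ℝ) < p ^ k := Real.rpow_pos_of_pos hp k
  have hqk : (0:ℝ) < q ^ k := Real.rpow_pos_of_pos hq k
  have hT2pos : 0 < T2 := by
    apply div_pos one_pos
    have : 0 < 1 - α * k := by linarith
    positivity
  have hT1pos : 0 < T1 := by
    apply div_pos one_pos
    have : 0 < β * k - 1 := by linarith
    positivity
  set Tmax : ℝ := T2 + T1 with hTmaxdef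
  have hT1le : T1 ≤ Tmax := by simp [hTmaxdef]; linarith
  -- V is nonincreasing on [0, ∞)
  have hVcont : ContinuousOn V (Set.Ici 0) := fun t ht =>
    (hVdiff t ht).continuousAt.continuousWithinAt
  have hderiv_nonpos : ∀ t ∈ Set.Ioi (0:ℝ), deriv V t ≤ 0 := by
    intro t ht
    have ht' : (0:ℝ) ≤ t := le_of_lt ht
    have h1 : (0:ℝ) ≤ p * V t ^ α + q * V t ^ β := by
      have := hVnonneg t ht'
      have h2 : (0:ℝ) ≤ V t ^ α := Real.rpow_nonneg this α
      have h3 : (0:ℝ) ≤ V t ^ β := Real.rpow_nonneg this β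
      positivity
    have h4 : (0:ℝ) ≤ (p * V t ^ α + q * V t ^ β) ^ k := Real.rpow_nonneg h1 k
    linarith [hVineq t ht']
  have hanti : AntitoneOn V (Set.Ici 0) := by
    apply antitoneOn_of_deriv_nonpos (convex_Ici 0) hVcont
    · rw [interior_Ici]
      exact fun x hx => (hVdiff x (le_of_lt hx)).differentiableWithinAt
    · rw [interior_Ici]; exact hderiv_nonpos
  by_cases hzero : ∃ t ∈ Set.Icc (0:ℝ) Tmax, V t = 0
  · obtain ⟨T, hT, hVT⟩ := hzero
    refine ⟨T, by linarith [hT.2], ?_⟩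
    intro t ht
    have htnn : (0:ℝ) ≤ t := le_trans hT.1 ht
    have h1 : V t ≤ V T := hanti hT.1 htnn ht
    have h2 : 0 ≤ V t := hVnonneg t htnn
    linarith [hVT ▸ h1]
  · exfalso
    push_neg at hzero
    have hpos : ∀ t ∈ Set.Icc (0:ℝ) Tmax, 0 < V t := fun t ht =>
      lt_of_le_of_ne (hVnonneg t ht.1) (Ne.symm (hzero t ht))
    -- Phase 1 : V T1 ≤ 1
    have hT1mem : T1 ∈ Set.Icc (0:ℝ) Tmax := ⟨le_of_lt hT1pos, hT1le⟩
    have phase1 : V T1 ≤ 1 := by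
      by_contra hc
      push_neg at hc
      have hgt : ∀ t ∈ Set.Icc (0:ℝ) T1, 1 < V t := by
        intro t ht
        have h := hanti (Set.mem_Ici.2 ht.1) (Set.mem_Ici.2 (le_of_lt hT1pos)) ht.2
        linarith
      set e : ℝ := 1 - β * k with hedef
      have he : e < 0 := by simp only [hedef]; linarith
      have hkey : ∀ x ∈ Set.Ioo (0:ℝ) T1, (β*k - 1) * q^k ≤ deriv (fun t => V t ^ e) x := by
        intro x hx
        have hx0 : (0:ℝ) ≤ x := le_of_lt hx.1
        have hVx : 1 < V x := hgt x ⟨hx0, le_of_lt hx.2⟩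
        have hVxpos : 0 < V x := by linarith
        have hd := ((hVdiff x hx0).hasDerivAt.rpow_const (p := e) (Or.inl (ne_of_gt hVxpos))).deriv
        rw [hd]
        have hb : deriv V x ≤ -(q^k * V x ^ (β*k)) := by
          have h1 : q * V x ^ β ≤ p * V x ^ α + q * V x ^ β := by
            have hpa : (0:ℝ) ≤ V x ^ α := Real.rpow_nonneg (le_of_lt hVxpos) α
            nlinarith
          have h0 : (0:ℝ) ≤ q * V x ^ β := by
            have := Real.rpow_nonneg (le_of_lt hVxpos) β
            positivity
          have h2 : (q * V x ^ β)^k ≤ (p * V x ^ α + q * V x ^ β)^k :=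
            Real.rpow_le_rpow h0 h1 (le_of_lt hk)
          have h3 : (q * V x ^ β)^k = q^k * V x ^ (β*k) := by
            rw [Real.mul_rpow (le_of_lt hq) (Real.rpow_nonneg (le_of_lt hVxpos) β),
              ← Real.rpow_mul (le_of_lt hVxpos)]
          linarith [hVineq x hx0, h3 ▸ h2]
        have hcpos : 0 < V x ^ (e - 1) := Real.rpow_pos_of_pos hVxpos _
        have hprod : V x ^ (β*k) * V x ^ (e - 1) = 1 := by
          rw [← Real.rpow_add hVxpos]
          have hz : β*k + (e-1) = 0 := by simp only [hedef]; ring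
          rw [hz, Real.rpow_zero]
        have hm : (-(q^k * V x ^ (β*k))) * e ≤ deriv V x * e :=
          mul_le_mul_of_nonpos_right hb (le_of_lt he)
        have hm2 := mul_le_mul_of_nonneg_right hm (le_of_lt hcpos)
        have hL : (-(q^k * V x ^ (β*k))) * e * (V x ^ (e-1)) = (β*k-1)*q^k := by
          have hr : (-(q^k * V x ^ (β*k))) * e * (V x ^ (e-1))
              = q^k * (-e) * (V x ^ (β*k) * V x ^ (e-1)) := by ring
          rw [hr, hprod, hedef]; ring
        linarith [hm2, hL]
      have hcont1 : ContinuousOn (fun t => V t ^ e) (Set.Icc (0:ℝ) T1) := by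
        apply ContinuousOn.rpow_const (hVcont.mono (fun x hx => hx.1))
        intro x hx
        exact Or.inl (ne_of_gt (lt_trans one_pos (hgt x hx)))
      have hdiff1 : ∀ x ∈ Set.Ioo (0:ℝ) T1, DifferentiableAt ℝ (fun t => V t ^ e) x := by
        intro x hx
        have hVx : 1 < V x := hgt x ⟨le_of_lt hx.1, le_of_lt hx.2⟩
        exact ((hVdiff x (le_of_lt hx.1)).hasDerivAt.rpow_const (p := e)
          (Or.inl (by linarith))).differentiableAt
      have hmain := deriv_lower_bound_aux (le_of_lt hT1pos) hcont1 hdiff1 hkey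
      have hne1 : q^k ≠ 0 := ne_of_gt hqk
      have hne2 : β*k - 1 ≠ 0 := ne_of_gt (by linarith)
      have hc1 : (β*k - 1) * q^k * (T1 - 0) = 1 := by
        rw [hT1def]; field_simp; ring
      rw [hc1] at hmain
      have h00 : 1 < V 0 := hgt 0 ⟨le_refl 0, le_of_lt hT1pos⟩
      have hg0 : 0 < V 0 ^ e := Real.rpow_pos_of_pos (by linarith) e
      have hgT1 : V T1 ^ e < 1 := Real.rpow_lt_one_of_one_lt_of_neg hc he
      linarith
    -- Phase 2 : contradiction
    set e2 : ℝ := 1 - α * k with he2def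
    have he2 : 0 < e2 := by simp only [he2def]; linarith
    have hposT : ∀ t ∈ Set.Icc T1 Tmax, 0 < V t := fun t ht =>
      hpos t ⟨le_trans (le_of_lt hT1pos) ht.1, ht.2⟩
    have hkey2 : ∀ x ∈ Set.Ioo T1 Tmax, (1-α*k) * p^k ≤ deriv (fun t => -(V t ^ e2)) x := by
      intro x hx
      have hx0 : (0:ℝ) ≤ x := le_trans (le_of_lt hT1pos) (le_of_lt hx.1)
      have hVxpos : 0 < V x := hposT x ⟨le_of_lt hx.1, le_of_lt hx.2⟩
      have hd := (((hVdiff x hx0).hasDerivAt.rpow_const (p := e2)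
        (Or.inl (ne_of_gt hVxpos))).neg).deriv
      rw [show (fun t => -(V t ^ e2)) = -(fun y => V y ^ e2) from rfl, hd]
      have hb : deriv V x ≤ -(p^k * V x ^ (α*k)) := by
        have h1 : p * V x ^ α ≤ p * V x ^ α + q * V x ^ β := by
          have hqb : (0:ℝ) ≤ V x ^ β := Real.rpow_nonneg (le_of_lt hVxpos) β
          nlinarith
        have h0 : (0:ℝ) ≤ p * V x ^ α := by
          have := Real.rpow_nonneg (le_of_lt hVxpos) α
          positivity
        have h2 : (p * V x ^ α)^k ≤ (p * V x ^ α + q * V x ^ β)^k :=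
          Real.rpow_le_rpow h0 h1 (le_of_lt hk)
        have h3 : (p * V x ^ α)^k = p^k * V x ^ (α*k) := by
          rw [Real.mul_rpow (le_of_lt hp) (Real.rpow_nonneg (le_of_lt hVxpos) α),
            ← Real.rpow_mul (le_of_lt hVxpos)]
        linarith [hVineq x hx0, h3 ▸ h2]
      have hcpos : 0 < V x ^ (e2 - 1) := Real.rpow_pos_of_pos hVxpos _
      have hprod : V x ^ (α*k) * V x ^ (e2 - 1) = 1 := by
        rw [← Real.rpow_add hVxpos]
        have hz : α*k + (e2-1) = 0 := by simp only [he2def]; ring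
        rw [hz, Real.rpow_zero]
      have hm := mul_le_mul_of_nonneg_right hb (le_of_lt he2)
      have hm2 := mul_le_mul_of_nonneg_right hm (le_of_lt hcpos)
      have hL : (-(p^k * V x ^ (α*k))) * e2 * (V x ^ (e2-1)) = -((1-α*k)*p^k) := by
        have hr : (-(p^k * V x ^ (α*k))) * e2 * (V x ^ (e2-1))
            = -(p^k * e2 * (V x ^ (α*k) * V x ^ (e2-1))) := by ring
        rw [hr, hprod, he2def]; ring
      linarith [hm2, hL]
    have hcont2 : ContinuousOn (fun t => -(V t ^ e2)) (Set.Icc T1 Tmax) := by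
      apply ContinuousOn.neg
      apply ContinuousOn.rpow_const
        (hVcont.mono (fun x hx => le_trans (le_of_lt hT1pos) hx.1))
      intro x hx
      exact Or.inl (ne_of_gt (hposT x hx))
    have hdiff2 : ∀ x ∈ Set.Ioo T1 Tmax, DifferentiableAt ℝ (fun t => -(V t ^ e2)) x := by
      intro x hx
      have hx0 : (0:ℝ) ≤ x := le_trans (le_of_lt hT1pos) (le_of_lt hx.1)
      have hVxpos : 0 < V x := hposT x ⟨le_of_lt hx.1, le_of_lt hx.2⟩
      exact (((hVdiff x hx0).hasDerivAt.rpow_const (p := e2)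
        (Or.inl (ne_of_gt hVxpos))).neg).differentiableAt
    have hmain2 := deriv_lower_bound_aux hT1le hcont2 hdiff2 hkey2
    have hne1 : p^k ≠ 0 := ne_of_gt hpk
    have hne2 : (1:ℝ) - α*k ≠ 0 := ne_of_gt (by linarith)
    have hc2 : (1-α*k) * p^k * (Tmax - T1) = 1 := by
      have hTT : Tmax - T1 = T2 := by simp [hTmaxdef]
      rw [hTT, hT2def]; field_simp; ring
    rw [hc2] at hmain2
    have hu1 : V T1 ^ e2 ≤ 1 := Real.rpow_le_one (hVnonneg T1 hT1mem.1) phase1 (le_of_lt he2)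
    have humax : 0 < V Tmax ^ e2 :=
      Real.rpow_pos_of_pos (hpos Tmax ⟨by linarith, le_refl _⟩) e2
    linarith
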